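/- arXiv:1412.2699 — 2 statements merged into one kernel-verified Lean document; each statement's English description precedes it below -/
import Mathlib

section
/- Let r ∈ ℕ and let c_0, c_1, …, c_r be complex numbers with c_0 ≠ 1 and Σ_{k=0}^{r} |c_k|² = 1. Define c_{k0} = c_k for k = 0,…,r (so c_{00} = c_0), c_{0j} = conj(c_{j0}) · (1 − c_{00})/(1 − conj(c_{00})) for j = 1,…,r, and c_{kj} = δ_{kj} − c_{k0} conj(c_{j0})/(1 − conj(c_{00})) for j, k = 1,…,r. Then the (r+1) × (r+1) matrix (c_{jk})_{j,k=0}^{r} is unitary. -/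
open MeasureTheory Filter Topology Matrix

noncomputable section

namespace Vilenkin

/-- The underlying additive subgroup of `ℤ → ZMod p` consisting of sequences that
vanish for all sufficiently small indices. -/
def VilSub (p : ℕ) : AddSubgroup (ℤ → ZMod p) where
  carrier := {x | ∃ k : ℤ, ∀ j < k, x j = 0}
  zero_mem' := ⟨0, fun _ _ => rfl⟩
  add_mem' := by
    rintro a b ⟨ka, hka⟩ ⟨kb, hkb⟩
    refine ⟨min ka kb, fun j hj => ?_⟩
    have h1 := hka j (lt_of_lt_of_le hj (min_le_left _ _))
    have h2 := hkb j (lt_of_lt_of_le hj (min_le_right _ _))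
    show a j + b j = 0
    rw [h1, h2, add_zero]
  neg_mem' := by
    rintro a ⟨ka, hka⟩
    refine ⟨ka, fun j hj => ?_⟩
    show -a j = 0
    rw [hka j hj, neg_zero]

/-- The Vilenkin group `G = G_p`. -/
abbrev Vil (p : ℕ) := {x : ℤ → ZMod p // x ∈ VilSub p}

/-- The (iterated) shift automorphism: `Ash p t x` is `A^t x`, with `(A x)_j = x_{j+1}`. -/
def Ash (p : ℕ) (t : ℤ) (x : Vil p) : Vil p :=
  ⟨fun j => x.1 (j + t), by
    obtain ⟨k, hk⟩ := x.2
    exact ⟨k - t, fun j hj => hk (j + t) (by omega)⟩⟩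

/-- `λ(x) = Σ_j x_j p^{-j}`. -/
def lam (p : ℕ) (x : Vil p) : ℝ := ∑' j : ℤ, ((x.1 j).val : ℝ) * (p : ℝ) ^ (-j)

/-- `λ` restricted to `H` with values in `ℕ`:  `Σ_{i ≥ 0} x_{-i} p^i`. -/
def lamNat (p : ℕ) (x : Vil p) : ℕ := ∑' i : ℕ, (x.1 (-(i : ℤ))).val * p ^ i

/-- The element `h_[α]` of `H` with `λ(h_[α]) = α` (base-`p` digits of `α`). -/
def hElt (p : ℕ) (α : ℕ) : Vil p :=
  ⟨fun j => if j ≤ 0 then ((α / p ^ (-j).toNat : ℕ) : ZMod p) else 0, by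
    refine ⟨-(α : ℤ), fun j hj => ?_⟩
    have hj0 : j ≤ 0 := by omega
    show (if j ≤ 0 then ((α / p ^ (-j).toNat : ℕ) : ZMod p) else 0) = 0
    rw [if_pos hj0]
    rcases Nat.lt_or_ge p 2 with hp | hp
    · interval_cases p
      · have hn : (-j).toNat ≠ 0 := by omega
        simp [zero_pow hn]
      · exact Subsingleton.elim _ _
    · have hn : α < (-j).toNat := by omega
      have h2 : α < 2 ^ (-j).toNat := lt_trans hn Nat.lt_two_pow_self
      have hpow : α < p ^ (-j).toNat :=
        lt_of_lt_of_le h2 (Nat.pow_le_pow_left hp _)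
      rw [Nat.div_eq_of_lt hpow]
      simp⟩

/-- The character `χ(x, ω) = exp((2πi/p) Σ_j x_j ω_{1-j})`. -/
def chi (p : ℕ) (x ω : Vil p) : ℂ :=
  Complex.exp ((2 * Real.pi * Complex.I / p) *
    ∑' j : ℤ, (((x.1 j).val : ℂ) * ((ω.1 (1 - j)).val : ℂ)))

/-- The generalized Walsh function `W_α(x) = χ(x, h_[α])`. -/
def Walsh (p : ℕ) (α : ℕ) (x : Vil p) : ℂ := chi p x (hElt p α)

/-- The element `δ_l` of `G` with `λ(δ_l) = l / p`. -/
def deltaElt (p : ℕ) (l : ℕ) : Vil p :=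
  ⟨fun j => if j = 1 then (l : ZMod p) else 0, ⟨1, fun j hj => if_neg (by omega)⟩⟩

/-- `U_l = {x : x_j = 0 for j ≤ l}`. -/
def Uball (p : ℕ) (l : ℤ) : Set (Vil p) := {x | ∀ j ≤ l, x.1 j = 0}

/-- `U = U_0`. -/
def Uset (p : ℕ) : Set (Vil p) := Uball p 0

/-- `H = {x : x_j = 0 for j > 0}`. -/
def Hset (p : ℕ) : Set (Vil p) := {x | ∀ j : ℤ, 0 < j → x.1 j = 0}

/-- The non-Archimedean norm `‖x‖ = p^{-k(x)}`, `‖θ‖ = 0`. -/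
def vnorm (p : ℕ) (x : Vil p) : ℝ := ⨆ j : ℤ, (if x.1 j ≠ 0 then (p : ℝ) ^ (-j) else 0)

/-- The Vilenkin topology, generated by the cosets of the subgroups `U_l`. -/
instance (p : ℕ) : TopologicalSpace (Vil p) :=
  TopologicalSpace.generateFrom
    {S | ∃ (x : Vil p) (l : ℤ), S = {y : Vil p | ∀ j ≤ l, y.1 j = x.1 j}}

instance (p : ℕ) : MeasurableSpace (Vil p) := borel (Vil p)

/-- `μ` is the Haar measure on `G`: translation invariant and normalized by `μ(U) = 1`. -/
def IsHaar (p : ℕ) (μ : Measure (Vil p)) : Prop :=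
  (∀ (a : Vil p) (s : Set (Vil p)), μ ((fun x => a + x) ⁻¹' s) = μ s) ∧ μ (Uset p) = 1

/-- The Fourier transform (integral form) `f̂(ω) = ∫ f(x) conj χ(x,ω) dμ(x)`. -/
def FT (p : ℕ) (μ : Measure (Vil p)) (f : Vil p → ℂ) (ω : Vil p) : ℂ :=
  ∫ x, f x * (starRingEnd ℂ) (chi p x ω) ∂μ

/-- The `L²` inner product `⟨f, g⟩ = ∫ f conj g dμ`. -/
def ip (p : ℕ) (μ : Measure (Vil p)) (f g : Vil p → ℂ) : ℂ :=
  ∫ x, f x * (starRingEnd ℂ) (g x) ∂μ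

/-- The dilated-translated system `ψ_{j,k}(x) = p^{j/2} ψ(A^j x ⊖ h_[k])`. -/
def wsys (p : ℕ) (ψ : Vil p → ℂ) (j : ℤ) (k : ℕ) (x : Vil p) : ℂ :=
  ((Real.sqrt p ^ j : ℝ) : ℂ) * ψ (Ash p j x - hElt p k)

/-- `m` is the Walsh polynomial of order `p^n - 1` with coefficients `a`. -/
def IsWalshPolyOfOrder (p n : ℕ) (a : ℕ → ℂ) (m : Vil p → ℂ) : Prop :=
  ∀ ω, m ω = ∑ α ∈ Finset.range (p ^ n), a α * (starRingEnd ℂ) (Walsh p α ω)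

/-- `m` is a Walsh polynomial. -/
def IsWalshPoly (p : ℕ) (m : Vil p → ℂ) : Prop :=
  ∃ n a, IsWalshPolyOfOrder p n a m

/-- The polyphase component `μ_{ν,s}(ω) = √p Σ_{α < p^{n-1}} a_{pα+s} conj W_α(ω)`. -/
def polyphase (p n : ℕ) (a : ℕ → ℂ) (s : ℕ) (ω : Vil p) : ℂ :=
  (Real.sqrt p : ℂ) *
    ∑ α ∈ Finset.range (p ^ (n - 1)), a (p * α + s) * (starRingEnd ℂ) (Walsh p α ω)

/-- The matrix `M(ω)` with entries `M(ω)_{l,ν} = m_ν(ω ⊕ δ_l)`. -/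
def MaskMatrix (p r : ℕ) (m : Fin (r + 1) → Vil p → ℂ) (ω : Vil p) :
    Matrix (Fin p) (Fin (r + 1)) ℂ :=
  Matrix.of fun l ν => m ν (ω + deltaElt p (l : ℕ))

/-- The unitary extension condition `M(ω) M(ω)* = I_p` for all `ω`. -/
def UEP (p r : ℕ) (m : Fin (r + 1) → Vil p → ℂ) : Prop :=
  ∀ ω : Vil p, MaskMatrix p r m ω * (MaskMatrix p r m ω)ᴴ = 1

/-- Condition (*): `Σ_{l<p} |m_0(ω ⊕ δ_l)|² ≤ 1` for all `ω`. -/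
def StarCond (p : ℕ) (m0 : Vil p → ℂ) : Prop :=
  ∀ ω : Vil p, ∑ l ∈ Finset.range p, ‖m0 (ω + deltaElt p l)‖ ^ 2 ≤ 1

/-- `φ` satisfies the refinement equation with coefficients `a` (of length `p^n`). -/
def RefinableWithMask (p n : ℕ) (a : ℕ → ℂ) (φ : Vil p → ℂ) : Prop :=
  ∀ x, φ x = p * ∑ α ∈ Finset.range (p ^ n), a α * φ (Ash p 1 x - hElt p α)

/-- The coset `U_{n,l} = A^{-n}(h_[l]) ⊕ A^{-n}(U)`. -/
def Unl (p : ℕ) (n l : ℕ) : Set (Vil p) :=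
  (fun u => Ash p (-(n : ℤ)) (hElt p l) + Ash p (-(n : ℤ)) u) '' Uset p

/-- Membership in the Sobolev space `W₂^m`, phrased in terms of (a representative of)
the Fourier transform `fhat` of `f`. -/
def MemW2 (p : ℕ) (μ : Measure (Vil p)) (m : ℕ) (fhat : Vil p → ℂ) : Prop :=
  ∀ k ≤ m, Integrable (fun ω => vnorm p ω ^ (2 * k) * ‖fhat ω‖ ^ 2) μ

/-- The Sobolev norm `‖f‖_{2,m}`, phrased via the Fourier transform `fhat` of `f`. -/
def sobNorm (p : ℕ) (μ : Measure (Vil p)) (m : ℕ) (fhat : Vil p → ℂ) : ℝ :=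
  ∑ k ∈ Finset.range (m + 1), Real.sqrt (∫ ω, vnorm p ω ^ (2 * k) * ‖fhat ω‖ ^ 2 ∂μ)

end Vilenkin
namespace Vilenkin

/-- **Proposition 5 (Householder transform).**  If `Σ_{k=0}^r |c_k|² = 1` and `c_0 ≠ 1`,
then the matrix with first column `c_{k0} = c_k`,
`c_{0j} = conj(c_{j0}) (1 - c_{00})/(1 - conj c_{00})` and
`c_{kj} = δ_{kj} - c_{k0} conj(c_{j0})/(1 - conj c_{00})` (for `j, k ≥ 1`) is unitary. -/
theorem statement8 (r : ℕ) (c : Fin (r + 1) → ℂ) (hc0 : c 0 ≠ 1)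
    (hnorm : ∑ k : Fin (r + 1), ‖c k‖ ^ 2 = 1)
    (C : Matrix (Fin (r + 1)) (Fin (r + 1)) ℂ)
    (hcol : ∀ k, C k 0 = c k)
    (hrow : ∀ j, j ≠ 0 →
      C 0 j = (starRingEnd ℂ) (c j) * ((1 - c 0) / (1 - (starRingEnd ℂ) (c 0))))
    (hin : ∀ k j, k ≠ 0 → j ≠ 0 →
      C k j = (if k = j then 1 else 0) -
        c k * (starRingEnd ℂ) (c j) / (1 - (starRingEnd ℂ) (c 0))) :
    C ∈ Matrix.unitaryGroup (Fin (r + 1)) ℂ := by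
  set e : ℂ := 1 - (starRingEnd ℂ) (c 0) with he
  have he0 : e ≠ 0 := by
    rw [he, sub_ne_zero]
    intro h
    apply hc0
    have := congrArg (starRingEnd ℂ) h
    simpa using this.symm
  have hec : (starRingEnd ℂ) e = 1 - c 0 := by simp [he]
  have hec0 : (starRingEnd ℂ) e ≠ 0 := by
    rw [hec, sub_ne_zero]; exact fun h => hc0 h.symm
  set u : Fin (r + 1) → ℂ := fun k => (if k = 0 then 1 else 0) - c k with hu
  have hcu : ∀ i, (starRingEnd ℂ) (u i) = (if i = 0 then 1 else 0) - (starRingEnd ℂ) (c i) := by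
    intro i; simp [hu, apply_ite (starRingEnd ℂ)]
  -- entry formula
  have hC : ∀ k j, C k j = (if k = j then 1 else 0) - u k * (starRingEnd ℂ) (u j) / e := by
    intro k j
    by_cases hk : k = 0 <;> by_cases hj : j = 0
    · subst hk; subst hj
      rw [hcol, hcu]
      simp only [hu, if_pos rfl, if_true, ← he]
      field_simp
      ring
    · subst hk
      rw [hrow j hj, hcu]
      simp only [hu, if_pos rfl, if_neg hj, if_neg (fun h : (0 : Fin (r+1)) = j => hj h.symm),
        if_true, ← he, hec]
      field_simp
      ring
    · subst hj
      rw [hcol, hcu]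
      simp only [hu, if_pos rfl, if_true, if_neg hk, ← he]
      field_simp
      ring
    · rw [hin k j hk hj, hcu]
      simp only [hu, if_neg hk, if_neg hj, ← he]
      ring
  -- norm sum
  have hsumc : ∑ i, c i * (starRingEnd ℂ) (c i) = 1 := by
    have h1 : ∀ i : Fin (r + 1), c i * (starRingEnd ℂ) (c i) = ((‖c i‖ ^ 2 : ℝ) : ℂ) := by
      intro i; rw [Complex.mul_conj, Complex.normSq_eq_norm_sq]
    simp only [h1]
    rw [← Complex.ofReal_sum, hnorm, Complex.ofReal_one]
  have hS : ∑ i, u i * (starRingEnd ℂ) (u i) = e + (starRingEnd ℂ) e := by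
    have h1 : ∀ i : Fin (r + 1), u i * (starRingEnd ℂ) (u i) =
        ((if i = 0 then (1 : ℂ) else 0) - (if i = 0 then (starRingEnd ℂ) (c i) else 0)
          - (if i = 0 then c i else 0)) + c i * (starRingEnd ℂ) (c i) := by
      intro i
      rw [hcu]
      simp only [hu]
      split_ifs <;> ring
    rw [Finset.sum_congr rfl (fun i _ => h1 i), Finset.sum_add_distrib,
      Finset.sum_sub_distrib, Finset.sum_sub_distrib, hsumc]
    simp only [Finset.sum_ite_eq', Finset.mem_univ, if_true]
    rw [hec, he]
    ring
  rw [Matrix.mem_unitaryGroup_iff]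
  ext k j
  rw [Matrix.mul_apply, Matrix.one_apply]
  simp only [Matrix.star_apply, hC]
  have hexp : ∀ i : Fin (r + 1),
      ((if k = i then (1 : ℂ) else 0) - u k * (starRingEnd ℂ) (u i) / e) *
        star ((if j = i then (1 : ℂ) else 0) - u j * (starRingEnd ℂ) (u i) / e) =
      (if k = i then (if j = i then (1 : ℂ) else 0) else 0)
        - (if k = i then (starRingEnd ℂ) (u j) * u i / (starRingEnd ℂ) e else 0)
        - (if j = i then u k * (starRingEnd ℂ) (u i) / e else 0)
        + u k * (starRingEnd ℂ) (u j) / (e * (starRingEnd ℂ) e) *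
            (u i * (starRingEnd ℂ) (u i)) := by
    intro i
    rw [star_sub, star_div₀, star_mul']
    simp only [Complex.star_def, Complex.conj_conj, apply_ite (starRingEnd ℂ),
      _root_.map_one, map_zero]
    split_ifs <;> field_simp <;> ring
  rw [Finset.sum_congr rfl (fun i _ => hexp i), Finset.sum_add_distrib,
    Finset.sum_sub_distrib, Finset.sum_sub_distrib, ← Finset.mul_sum, hS]
  simp only [Finset.sum_ite_eq, Finset.mem_univ, if_true]
  by_cases hkj : k = j
  · subst hkj; simp only [if_pos rfl]
    field_simp
    ring
  · rw [if_neg hkj, if_neg (fun h : j = k => hkj h.symm)]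
    field_simp
    ring


end Vilenkin
end
end

section
/- Let n ∈ ℕ and let m_0 be a Walsh polynomial of order p^n − 1 with coefficients a_α, i.e. m_0(ω) = Σ_{α=0}^{p^n−1} a_α conj(W_α(ω)). Then m_0(θ) = 1 and condition (*) hold if and only if the coefficients a_α are given by the discrete Vilenkin–Chrestenson transform a_α = p^{−n} Σ_{s=0}^{p^n−1} b_s W_α(A^{−n} h_[s]) of complex numbers b_0,…,b_{p^n−1} (equivalently, b_s = m_0(A^{−n} h_[s])) satisfying b_0 = 1 and |b_l|² + |b_{l+p^{n−1}}|² + ⋯ + |b_{l+(p−1)p^{n−1}}|² ≤ 1 for every l = 0,…,p^{n−1}−1. -/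
open MeasureTheory Filter Topology Matrix

noncomputable section

namespace Vilenkin

noncomputable section StarHelpers


variable {p : ℕ}

/-- primitive p-th root of unity -/
def eps (p : ℕ) : ℂ := Complex.exp (2 * Real.pi * Complex.I / p)

/-- the standard character of ZMod p -/
def ee (p : ℕ) (z : ZMod p) : ℂ := eps p ^ z.val

lemma eps_pow_p (hp : 2 ≤ p) : eps p ^ p = 1 :=
  (Complex.isPrimitiveRoot_exp p (by omega)).pow_eq_one

lemma eps_pow_mod (hp : 2 ≤ p) (m : ℕ) : eps p ^ (m % p) = eps p ^ m := by
  conv_rhs => rw [← Nat.mod_add_div m p, pow_add, pow_mul, eps_pow_p hp, one_pow, mul_one]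

lemma ee_natCast (hp : 2 ≤ p) (m : ℕ) : ee p (m : ZMod p) = eps p ^ m := by
  rw [ee, ZMod.val_natCast, eps_pow_mod hp]

lemma ee_zero (hp : 2 ≤ p) : ee p 0 = 1 := by
  have : ((0:ℕ) : ZMod p) = 0 := Nat.cast_zero
  rw [← this, ee_natCast hp, pow_zero]

lemma ee_add (hp : 2 ≤ p) (x y : ZMod p) : ee p (x + y) = ee p x * ee p y := by
  have : NeZero p := ⟨by omega⟩
  have hx : ((x.val : ℕ) : ZMod p) = x := ZMod.natCast_rightInverse x
  have hy : ((y.val : ℕ) : ZMod p) = y := ZMod.natCast_rightInverse y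
  calc ee p (x + y) = ee p (((x.val + y.val : ℕ)) : ZMod p) := by push_cast [hx, hy]; ring_nf
    _ = eps p ^ (x.val + y.val) := ee_natCast hp _
    _ = ee p x * ee p y := by rw [pow_add]; rfl

lemma ee_mul_self_neg (hp : 2 ≤ p) (x : ZMod p) : ee p x * ee p (-x) = 1 := by
  rw [← ee_add hp, add_neg_cancel, ee_zero hp]

lemma conj_eps (hp : 2 ≤ p) : (starRingEnd ℂ) (eps p) * eps p = 1 := by
  rw [eps, ← Complex.exp_conj, ← Complex.exp_add]
  have : (starRingEnd ℂ) (2 * ↑Real.pi * Complex.I / ↑p) = -(2 * ↑Real.pi * Complex.I / ↑p) := by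
    simp only [map_div₀, _root_.map_mul, map_ofNat, Complex.conj_I, Complex.conj_ofReal, map_natCast]
    ring
  rw [this, neg_add_cancel, Complex.exp_zero]

lemma conj_ee (hp : 2 ≤ p) (x : ZMod p) : (starRingEnd ℂ) (ee p x) = ee p (-x) := by
  have h1 : (starRingEnd ℂ) (ee p x) * ee p x = 1 := by
    rw [ee, map_pow, ← mul_pow, conj_eps hp, one_pow]
  have h2 := ee_mul_self_neg hp x
  have hne : ee p x ≠ 0 := by
    intro h; rw [h, zero_mul] at h2; exact one_ne_zero h2.symm
  have := mul_right_cancel₀ hne (h1.trans ((mul_comm _ _).trans h2).symm)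
  exact this

lemma ee_sum (hp : 2 ≤ p) (c : ZMod p) :
    ∑ t ∈ Finset.range p, ee p ((t : ZMod p) * c) = if c = 0 then (p : ℂ) else 0 := by
  have : NeZero p := ⟨by omega⟩
  by_cases hc : c = 0
  · simp [hc, ee_zero hp]
  · rw [if_neg hc]
    have hcv : 0 < c.val := by
      rcases Nat.eq_zero_or_pos c.val with h | h
      · exact absurd ((ZMod.val_eq_zero c).mp h) hc
      · exact h
    have key : ∀ t : ℕ, ee p ((t : ZMod p) * c) = (eps p ^ c.val) ^ t := by
      intro t
      have : ((t : ZMod p) * c) = (((t * c.val : ℕ)) : ZMod p) := by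
        push_cast [ZMod.natCast_rightInverse c]
        ring
      rw [this, ee_natCast hp, pow_mul, ← pow_mul, mul_comm, pow_mul]
    simp_rw [key]
    have hne : eps p ^ c.val ≠ 1 :=
      (Complex.isPrimitiveRoot_exp p (by omega)).pow_ne_one_of_pos_of_lt hcv.ne' (ZMod.val_lt c)
    rw [geom_sum_eq hne, ← pow_mul, mul_comm c.val p, pow_mul, eps_pow_p hp, one_pow,
      sub_self, zero_div]



lemma hElt_coe (p α : ℕ) (j : ℤ) :
    (hElt p α).1 j = if j ≤ 0 then ((α / p ^ (-j).toNat : ℕ) : ZMod p) else 0 := rfl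

lemma ee_val_mul (hp : 2 ≤ p) (a b : ZMod p) :
    Complex.exp (2 * Real.pi * Complex.I / p * ((a.val : ℂ) * (b.val : ℂ))) = ee p (a * b) := by
  have : NeZero p := ⟨by omega⟩
  have ha : ((a.val : ℕ) : ZMod p) = a := ZMod.natCast_rightInverse a
  have hb : ((b.val : ℕ) : ZMod p) = b := ZMod.natCast_rightInverse b
  have h1 : ((a.val * b.val : ℕ) : ZMod p) = a * b := by
    rw [Nat.cast_mul, ha, hb]
  rw [← h1, ee_natCast hp, eps, ← Complex.exp_nat_mul]
  congr 1
  push_cast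
  ring

lemma walsh_eq (hp : 2 ≤ p) {n α : ℕ} (hα : α < p ^ n) (x : Vil p) :
    Walsh p α x = ∏ k ∈ Finset.range n, ee p (x.1 ((k : ℤ) + 1) * ((α / p ^ k : ℕ) : ZMod p)) := by
  rw [Walsh, chi]
  have hsum : ∑' j : ℤ, (((x.1 j).val : ℂ) * (((hElt p α).1 (1 - j)).val : ℂ))
      = ∑ j ∈ Finset.Icc (1:ℤ) (n:ℤ), ((x.1 j).val : ℂ) * (((hElt p α).1 (1 - j)).val : ℂ) := by
    apply tsum_eq_sum
    intro j hj
    rw [Finset.mem_Icc, not_and_or, not_le, not_le] at hj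
    rcases hj with hj | hj
    · have : (hElt p α).1 (1 - j) = 0 := by rw [hElt_coe, if_neg (by omega)]
      simp [this]
    · have h0 : (1:ℤ) - j ≤ 0 := by omega
      have : (hElt p α).1 (1 - j) = 0 := by
        rw [hElt_coe, if_pos h0]
        have hexp : n ≤ (-((1:ℤ) - j)).toNat := by omega
        have hd : α / p ^ (-((1:ℤ)-j)).toNat = 0 :=
          Nat.div_eq_of_lt (lt_of_lt_of_le hα (Nat.pow_le_pow_right (by omega) hexp))
        rw [hd, Nat.cast_zero]
      simp [this]
  rw [hsum, Finset.mul_sum, Complex.exp_sum]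
  refine Finset.prod_nbij' (fun j => (j - 1).toNat) (fun k => (k : ℤ) + 1) ?_ ?_ ?_ ?_ ?_
  · intro j hj; rw [Finset.mem_Icc] at hj; rw [Finset.mem_range]
    show (j - 1).toNat < n; omega
  · intro k hk; rw [Finset.mem_range] at hk; rw [Finset.mem_Icc]
    show (1:ℤ) ≤ (k:ℤ) + 1 ∧ (k:ℤ) + 1 ≤ (n:ℤ); omega
  · intro j hj; rw [Finset.mem_Icc] at hj
    show ((((j - 1).toNat : ℕ) : ℤ)) + 1 = j; omega
  · intro k _
    show ((k:ℤ) + 1 - 1).toNat = k; omega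
  · intro j hj
    rw [Finset.mem_Icc] at hj
    show _ = ee p (x.1 ((((j - 1).toNat : ℕ) : ℤ) + 1) * ((α / p ^ (j-1).toNat : ℕ) : ZMod p))
    have hj1 : ((j - 1).toNat : ℤ) + 1 = j := by omega
    have hx : x.1 (((j - 1).toNat : ℤ) + 1) = x.1 j := by rw [hj1]
    have hh : (hElt p α).1 (1 - j) = ((α / p ^ (j-1).toNat : ℕ) : ZMod p) := by
      rw [hElt_coe, if_pos (by omega : 1 - j ≤ 0)]
      have hT : (-(1 - j)).toNat = (j - 1).toNat := by omega
      rw [hT]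
    rw [hh, ← hx, ee_val_mul hp]

/-- the point `A^{-n} h_[s]` -/
def pt (p n s : ℕ) : Vil p := Ash p (-(n : ℤ)) (hElt p s)

lemma pt_coe (p n s : ℕ) (j : ℤ) : (pt p n s).1 j = (hElt p s).1 (j - n) := by
  show (hElt p s).1 (j + -(n:ℤ)) = _
  rw [← sub_eq_add_neg]

lemma add_coe {p : ℕ} (x y : Vil p) (j : ℤ) : (x + y).1 j = x.1 j + y.1 j := rfl

lemma delta_coe (p l : ℕ) (j : ℤ) :
    (deltaElt p l).1 j = if j = 1 then (l : ZMod p) else 0 := rfl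

lemma pt_coord {p : ℕ} {n : ℕ} (s : ℕ) {k : ℕ} (hk : k < n) :
    (pt p n s).1 ((k:ℤ) + 1) = ((s / p ^ (n - 1 - k) : ℕ) : ZMod p) := by
  rw [pt_coe, hElt_coe, if_pos (by omega : (k:ℤ) + 1 - n ≤ 0)]
  have hT : (-((k:ℤ) + 1 - n)).toNat = n - 1 - k := by omega
  rw [hT]

lemma pt_zero (p n : ℕ) : pt p n 0 = 0 := by
  apply Subtype.ext; funext j
  show (hElt p 0).1 (j + -(n:ℤ)) = 0
  rw [hElt_coe]
  split <;> simp

lemma pt_add_delta {p : ℕ} (hp : 2 ≤ p) {n l i : ℕ} (hn : 1 ≤ n) (hl : l < p ^ (n-1))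
    (hi : i < p) :
    pt p n (l + i * p ^ (n - 1)) = pt p n l + deltaElt p i := by
  have hppos : 0 < p := by omega
  have hbig : l + i * p ^ (n-1) < p ^ n := by
    have h1 : l + i * p ^ (n-1) < p ^ (n-1) + i * p ^ (n-1) := by omega
    have h2 : i * p ^ (n-1) ≤ (p-1) * p ^ (n-1) :=
      Nat.mul_le_mul_right _ (by omega)
    have h3 : p ^ (n-1) + (p-1) * p ^ (n-1) = p * p ^ (n-1) := by
      have : p ^ (n-1) + (p-1) * p ^ (n-1) = (1 + (p-1)) * p ^ (n-1) := by ring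
      rw [this]
      congr 1
      omega
    have h4 : p * p ^ (n-1) = p ^ n := by
      rw [← pow_succ']
      congr 1
      omega
    omega
  apply Subtype.ext; funext j
  rw [add_coe, pt_coe, pt_coe, hElt_coe, hElt_coe, delta_coe]
  by_cases hj1 : j = 1
  · subst hj1
    rw [if_pos (by omega : (1:ℤ) - n ≤ 0), if_pos (by omega : (1:ℤ) - n ≤ 0), if_pos rfl]
    have hT : (-((1:ℤ) - n)).toNat = n - 1 := by omega
    rw [hT]
    have h1 : (l + i * p ^ (n-1)) / p ^ (n-1) = i := by
      rw [Nat.add_mul_div_right _ _ (pow_pos hppos _), Nat.div_eq_of_lt hl, zero_add]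
    have h2 : l / p ^ (n-1) = 0 := Nat.div_eq_of_lt hl
    rw [h1, h2, Nat.cast_zero, zero_add]
  · rw [if_neg hj1, add_zero]
    by_cases hjn : j ≤ (n:ℤ)
    · rw [if_pos (by omega : j - n ≤ 0), if_pos (by omega : j - n ≤ 0)]
      have hKval : ((-(j - (n:ℤ))).toNat : ℤ) = (n:ℤ) - j := by omega
      set K := (-(j - (n:ℤ))).toNat with hKdef
      by_cases hj0 : j ≤ 0
      · have hKge : n ≤ K := by omega
        have hple : p ^ n ≤ p ^ K := Nat.pow_le_pow_right hppos hKge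
        rw [Nat.div_eq_of_lt (by omega), Nat.div_eq_of_lt (by omega)]
      · -- 2 ≤ j ≤ n
        have hKle : K ≤ n - 2 := by omega
        have hsplit : i * p ^ (n-1) = (i * p ^ (n-1-K)) * p ^ K := by
          rw [mul_assoc, ← pow_add]
          congr 2
          omega
        rw [hsplit, Nat.add_mul_div_right _ _ (pow_pos hppos K), Nat.cast_add,
          Nat.cast_mul, Nat.cast_pow, ZMod.natCast_self,
          zero_pow (by omega : n - 1 - K ≠ 0), mul_zero, add_zero]
    · rw [if_neg (by omega : ¬ j - (n:ℤ) ≤ 0), if_neg (by omega : ¬ j - (n:ℤ) ≤ 0)]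

lemma delta_add {p : ℕ} (hp : 2 ≤ p) (i l : ℕ) :
    deltaElt p i + deltaElt p l = deltaElt p ((i + l) % p) := by
  apply Subtype.ext; funext j
  rw [add_coe, delta_coe, delta_coe, delta_coe]
  by_cases hj : j = 1
  · rw [if_pos hj, if_pos hj, if_pos hj, ZMod.natCast_mod, Nat.cast_add]
  · rw [if_neg hj, if_neg hj, if_neg hj, add_zero]

lemma walsh_pt {p : ℕ} (hp : 2 ≤ p) {n α : ℕ} (hα : α < p ^ n) (s : ℕ) :
    Walsh p α (pt p n s) = ∏ k ∈ Finset.range n,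
      ee p (((s / p ^ (n - 1 - k) : ℕ) : ZMod p) * ((α / p ^ k : ℕ) : ZMod p)) := by
  rw [walsh_eq hp hα]
  apply Finset.prod_congr rfl
  intro k hk
  rw [Finset.mem_range] at hk
  rw [pt_coord s hk]

lemma dig_eq {p n : ℕ} (g : Fin n → Fin p) (m : Fin n) :
    (finFunctionFinEquiv g : ℕ) / p ^ (m:ℕ) % p = (g m : ℕ) := by
  have h1 := congrFun (finFunctionFinEquiv.symm_apply_apply g) m
  have h2 : (finFunctionFinEquiv.symm (finFunctionFinEquiv g) m : ℕ)
      = (finFunctionFinEquiv g : ℕ) / p ^ (m:ℕ) % p := rfl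
  rw [h1] at h2
  exact h2.symm

lemma exists_digit_ne {p : ℕ} (hp : 2 ≤ p) {n α β : ℕ} (hα : α < p ^ n) (hβ : β < p ^ n)
    (hne : α ≠ β) :
    ∃ k < n, ((α / p ^ k : ℕ) : ZMod p) ≠ ((β / p ^ k : ℕ) : ZMod p) := by
  have : NeZero p := ⟨by omega⟩
  by_contra hcon
  push_neg at hcon
  apply hne
  have hdig : finFunctionFinEquiv.symm (⟨α, hα⟩ : Fin (p^n))
      = finFunctionFinEquiv.symm (⟨β, hβ⟩ : Fin (p^n)) := by
    funext k
    apply Fin.ext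
    show α / p ^ (k:ℕ) % p = β / p ^ (k:ℕ) % p
    have h1 := hcon (k:ℕ) k.isLt
    have h2 := congrArg ZMod.val h1
    rwa [ZMod.val_natCast, ZMod.val_natCast] at h2
  have := finFunctionFinEquiv.symm.injective hdig
  exact congrArg Fin.val this

lemma walsh_orth {p : ℕ} (hp : 2 ≤ p) {n : ℕ} (hn : 1 ≤ n) {α β : ℕ}
    (hα : α < p ^ n) (hβ : β < p ^ n) :
    ∑ s ∈ Finset.range (p ^ n),
        Walsh p α (pt p n s) * (starRingEnd ℂ) (Walsh p β (pt p n s))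
      = if α = β then ((p:ℂ)) ^ n else 0 := by
  have : NeZero p := ⟨by omega⟩
  set c : ℕ → ZMod p := fun k => ((α / p ^ k : ℕ) : ZMod p) - ((β / p ^ k : ℕ) : ZMod p)
    with hc
  have hterm : ∀ s : ℕ, Walsh p α (pt p n s) * (starRingEnd ℂ) (Walsh p β (pt p n s))
      = ∏ m ∈ Finset.range n, ee p (((s / p ^ m : ℕ) : ZMod p) * c (n-1-m)) := by
    intro s
    have h1 : Walsh p α (pt p n s) * (starRingEnd ℂ) (Walsh p β (pt p n s))
        = ∏ k ∈ Finset.range n, ee p (((s / p ^ (n-1-k) : ℕ) : ZMod p) * c k) := by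
      rw [walsh_pt hp hα, walsh_pt hp hβ, map_prod, ← Finset.prod_mul_distrib]
      apply Finset.prod_congr rfl
      intro k _
      rw [conj_ee hp, ← ee_add hp]
      congr 1
      rw [hc]
      ring
    rw [h1]
    refine Finset.prod_nbij' (fun k => n-1-k) (fun m => n-1-m) ?_ ?_ ?_ ?_ ?_
    · intro k hk; rw [Finset.mem_range] at *; show n-1-k < n; omega
    · intro m hm; rw [Finset.mem_range] at *; show n-1-m < n; omega
    · intro k hk; rw [Finset.mem_range] at hk; show n-1-(n-1-k) = k; omega
    · intro m hm; rw [Finset.mem_range] at hm; show n-1-(n-1-m) = m; omega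
    · intro k hk; rw [Finset.mem_range] at hk
      show ee p (((s / p ^ (n-1-k) : ℕ) : ZMod p) * c k)
        = ee p (((s / p ^ (n-1-k) : ℕ) : ZMod p) * c (n-1-(n-1-k)))
      have hkk : n-1-(n-1-k) = k := by omega
      rw [hkk]
  calc ∑ s ∈ Finset.range (p ^ n),
        Walsh p α (pt p n s) * (starRingEnd ℂ) (Walsh p β (pt p n s))
      = ∑ s ∈ Finset.range (p ^ n),
          ∏ m ∈ Finset.range n, ee p (((s / p ^ m : ℕ) : ZMod p) * c (n-1-m)) :=
        Finset.sum_congr rfl (fun s _ => hterm s)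
    _ = ∑ y : Fin (p ^ n),
          ∏ m ∈ Finset.range n, ee p ((((y:ℕ) / p ^ m : ℕ) : ZMod p) * c (n-1-m)) :=
        (Fin.sum_univ_eq_sum_range _ _).symm
    _ = ∑ g : Fin n → Fin p,
          ∏ i : Fin n, ee p (((g i : ℕ) : ZMod p) * c (n-1-(i:ℕ))) := by
        apply Fintype.sum_equiv finFunctionFinEquiv.symm
        intro y
        rw [← Fin.prod_univ_eq_prod_range
          (fun m => ee p ((((y:ℕ) / p ^ m : ℕ) : ZMod p) * c (n-1-m))) n]
        apply Finset.prod_congr rfl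
        intro i _
        have hmod : (((y:ℕ) / p ^ (i:ℕ) % p : ℕ) : ZMod p)
            = (((y:ℕ) / p ^ (i:ℕ) : ℕ) : ZMod p) := ZMod.natCast_mod _ p
        have hdig : (finFunctionFinEquiv.symm y i : ℕ) = (y:ℕ) / p ^ (i:ℕ) % p := rfl
        rw [← hmod, ← hdig]
    _ = ∏ i : Fin n, ∑ t : Fin p, ee p (((t : ℕ) : ZMod p) * c (n-1-(i:ℕ))) :=
        (Fintype.prod_sum (fun (i : Fin n) (t : Fin p) => ee p (((t : ℕ) : ZMod p) * c (n-1-(i:ℕ))))).symm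
    _ = ∏ i : Fin n, (if c (n-1-(i:ℕ)) = 0 then (p:ℂ) else 0) := by
        apply Finset.prod_congr rfl
        intro i _
        rw [Fin.sum_univ_eq_sum_range (fun t => ee p (((t:ℕ) : ZMod p) * c (n-1-(i:ℕ)))) p]
        exact ee_sum hp _
    _ = if α = β then ((p:ℂ)) ^ n else 0 := by
        by_cases hab : α = β
        · rw [if_pos hab]
          subst hab
          have hc0 : ∀ m, c m = 0 := fun m => by rw [hc]; exact sub_self _
          simp only [hc0, if_pos]
          rw [Finset.prod_const, Finset.card_univ, Fintype.card_fin]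
        · rw [if_neg hab]
          obtain ⟨k, hk, hck⟩ := exists_digit_ne hp hα hβ hab
          apply Finset.prod_eq_zero (Finset.mem_univ (⟨n-1-k, by omega⟩ : Fin n))
          have hkk : n-1-((⟨n-1-k, by omega⟩ : Fin n) : ℕ) = k := by
            show n-1-(n-1-k) = k; omega
          rw [hkk]
          simp only [hc]
          rw [if_neg (sub_ne_zero_of_ne hck)]

end StarHelpers

/-- **Proposition 6.**  A Walsh polynomial `m_0` of order `p^n - 1` satisfies `m_0(θ) = 1`
and condition (*) iff its coefficients are given by the discrete Vilenkin–Chrestenson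
transform `a_α = p^{-n} Σ_s b_s W_α(A^{-n} h_[s])` of numbers `b_s` (equivalently
`b_s = m_0(A^{-n} h_[s])`) satisfying `b_0 = 1` and
`|b_l|² + |b_{l+p^{n-1}}|² + ⋯ + |b_{l+(p-1)p^{n-1}}|² ≤ 1` for `0 ≤ l ≤ p^{n-1} - 1`. -/
theorem statement12 (p : ℕ) (hp : 2 ≤ p) (n : ℕ) (hn : 1 ≤ n)
    (a : ℕ → ℂ) (m0 : Vil p → ℂ) (hm0 : IsWalshPolyOfOrder p n a m0) :
    (m0 0 = 1 ∧ StarCond p m0) ↔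
      ∃ b : ℕ → ℂ,
        (∀ α < p ^ n, a α = ((p : ℂ) ^ n)⁻¹ *
          ∑ s ∈ Finset.range (p ^ n), b s * Walsh p α (Ash p (-(n : ℤ)) (hElt p s))) ∧
        (∀ s < p ^ n, b s = m0 (Ash p (-(n : ℤ)) (hElt p s))) ∧
        b 0 = 1 ∧
        (∀ l < p ^ (n - 1),
          ∑ i ∈ Finset.range p, ‖b (l + i * p ^ (n - 1))‖ ^ 2 ≤ 1) := by
  have hppos : 0 < p := by omega
  have : NeZero p := ⟨by omega⟩
  have hpc : (p:ℂ) ≠ 0 := Nat.cast_ne_zero.mpr (by omega)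
  constructor
  · rintro ⟨h1, hstar⟩
    refine ⟨fun s => m0 (pt p n s), ?_, ?_, ?_, ?_⟩
    · intro α hα
      show a α = ((p:ℂ) ^ n)⁻¹ *
        ∑ s ∈ Finset.range (p ^ n), m0 (pt p n s) * Walsh p α (pt p n s)
      have hsum : ∑ s ∈ Finset.range (p ^ n), m0 (pt p n s) * Walsh p α (pt p n s)
          = ∑ β ∈ Finset.range (p ^ n), a β * ∑ s ∈ Finset.range (p ^ n),
              Walsh p α (pt p n s) * (starRingEnd ℂ) (Walsh p β (pt p n s)) := by
        have e1 : ∀ s ∈ Finset.range (p ^ n), m0 (pt p n s) * Walsh p α (pt p n s)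
            = ∑ β ∈ Finset.range (p ^ n),
                a β * (Walsh p α (pt p n s) * (starRingEnd ℂ) (Walsh p β (pt p n s))) := by
          intro s _
          rw [hm0 (pt p n s), Finset.sum_mul]
          apply Finset.sum_congr rfl
          intro β _
          ring
        rw [Finset.sum_congr rfl e1, Finset.sum_comm]
        apply Finset.sum_congr rfl
        intro β _
        rw [Finset.mul_sum]
      rw [hsum, Finset.sum_congr rfl (fun β hβm => by
        rw [walsh_orth hp hn hα (Finset.mem_range.mp hβm)])]
      rw [Finset.sum_eq_single α (fun b hb hne => by rw [if_neg (Ne.symm hne), mul_zero])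
        (fun h => absurd (Finset.mem_range.mpr hα) h), if_pos rfl,
        mul_comm (a α), inv_mul_cancel_left₀ (pow_ne_zero n hpc)]
    · intro s _
      rfl
    · show m0 (pt p n 0) = 1
      rw [pt_zero]
      exact h1
    · intro l hl
      refine le_trans (le_of_eq ?_) (hstar (pt p n l))
      apply Finset.sum_congr rfl
      intro i hi
      rw [Finset.mem_range] at hi
      show ‖m0 (pt p n (l + i * p ^ (n-1)))‖ ^ 2 = _
      rw [pt_add_delta hp hn hl hi]
  · rintro ⟨b, hb1, hb2, hb3, hb4⟩
    have hm00 : m0 0 = 1 := by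
      have h0 : (0:ℕ) < p ^ n := pow_pos hppos n
      calc m0 0 = m0 (pt p n 0) := by rw [pt_zero]
        _ = b 0 := (hb2 0 h0).symm
        _ = 1 := hb3
    refine ⟨hm00, ?_⟩
    intro ω
    set g : Fin n → Fin p := fun k => ⟨(ω.1 ((n:ℤ) - (k:ℕ))).val, ZMod.val_lt _⟩ with hg
    set s : ℕ := (finFunctionFinEquiv g : ℕ) with hsdef
    have hslt : s < p ^ n := (finFunctionFinEquiv g).isLt
    have hcoord : ∀ k < n, (pt p n s).1 ((k:ℤ) + 1) = ω.1 ((k:ℤ) + 1) := by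
      intro k hk
      rw [pt_coord s hk, ← ZMod.natCast_mod]
      have hdig : s / p ^ (n-1-k) % p = (g ⟨n-1-k, by omega⟩ : ℕ) := by
        rw [hsdef]
        exact dig_eq g ⟨n-1-k, by omega⟩
      rw [hdig]
      show (((ω.1 ((n:ℤ) - ((n-1-k : ℕ):ℤ))).val : ℕ) : ZMod p) = ω.1 ((k:ℤ) + 1)
      have hidx : (n:ℤ) - ((n-1-k : ℕ):ℤ) = (k:ℤ) + 1 := by omega
      rw [hidx]
      exact ZMod.natCast_rightInverse _
    have hcong : ∀ y z : Vil p, (∀ k < n, y.1 ((k:ℤ) + 1) = z.1 ((k:ℤ) + 1)) →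
        m0 y = m0 z := by
      intro y z h
      rw [hm0 y, hm0 z]
      apply Finset.sum_congr rfl
      intro β hβ
      rw [Finset.mem_range] at hβ
      have : Walsh p β y = Walsh p β z := by
        rw [walsh_eq hp hβ, walsh_eq hp hβ]
        apply Finset.prod_congr rfl
        intro k hk
        rw [Finset.mem_range] at hk
        rw [h k hk]
      rw [this]
    set l0 := s % p ^ (n-1) with hl0
    set i := s / p ^ (n-1) with hidef
    have hl0lt : l0 < p ^ (n-1) := Nat.mod_lt _ (pow_pos hppos _)
    have hilt : i < p := by
      rw [hidef]
      apply Nat.div_lt_of_lt_mul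
      calc s < p ^ n := hslt
        _ = p ^ (n-1) * p := by rw [← pow_succ]; congr 1; omega
    have hdecomp : s = l0 + i * p ^ (n-1) := by
      rw [hl0, hidef, Nat.mod_add_div' s (p ^ (n-1))]
    have hbound : ∀ c < p, l0 + c * p ^ (n-1) < p ^ n := by
      intro c hc
      have h2 : c * p ^ (n-1) ≤ (p-1) * p ^ (n-1) := Nat.mul_le_mul_right _ (by omega)
      have h3 : p ^ (n-1) + (p-1) * p ^ (n-1) = p * p ^ (n-1) := by
        have he : p ^ (n-1) + (p-1) * p ^ (n-1) = (1 + (p-1)) * p ^ (n-1) := by ring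
        rw [he]
        congr 1
        omega
      have h4 : p * p ^ (n-1) = p ^ n := by
        rw [← pow_succ']
        congr 1
        omega
      omega
    have key : ∀ l < p, m0 (ω + deltaElt p l) = b (l0 + ((i + l) % p) * p ^ (n-1)) := by
      intro l hl
      have e1 : m0 (ω + deltaElt p l) = m0 (pt p n s + deltaElt p l) := by
        apply hcong
        intro k hk
        rw [add_coe, add_coe, hcoord k hk]
      have e2 : pt p n s + deltaElt p l = pt p n (l0 + ((i + l) % p) * p ^ (n-1)) := by
        conv_lhs => rw [hdecomp]
        rw [pt_add_delta hp hn hl0lt hilt, add_assoc, delta_add hp,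
          ← pt_add_delta hp hn hl0lt (Nat.mod_lt _ hppos)]
      rw [e1, e2]
      exact (hb2 _ (hbound _ (Nat.mod_lt _ hppos))).symm
    calc ∑ l ∈ Finset.range p, ‖m0 (ω + deltaElt p l)‖ ^ 2
        = ∑ l ∈ Finset.range p, ‖b (l0 + ((i + l) % p) * p ^ (n-1))‖ ^ 2 := by
          apply Finset.sum_congr rfl
          intro l hl
          rw [Finset.mem_range] at hl
          rw [key l hl]
      _ = ∑ t ∈ Finset.range p, ‖b (l0 + t * p ^ (n-1))‖ ^ 2 := by
          refine Finset.sum_nbij' (fun l => (i + l) % p) (fun t => (t + (p - i)) % p)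
            ?_ ?_ ?_ ?_ ?_
          · intro l hl; rw [Finset.mem_range] at *
            show (i + l) % p < p
            exact Nat.mod_lt _ hppos
          · intro t ht; rw [Finset.mem_range] at *
            show (t + (p - i)) % p < p
            exact Nat.mod_lt _ hppos
          · intro l hl; rw [Finset.mem_range] at hl
            show ((i + l) % p + (p - i)) % p = l
            rw [Nat.mod_add_mod]
            have he : i + l + (p - i) = l + p := by omega
            rw [he, Nat.add_mod_right, Nat.mod_eq_of_lt hl]
          · intro t ht; rw [Finset.mem_range] at ht
            show (i + (t + (p - i)) % p) % p = t
            rw [Nat.add_mod_mod]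
            have he : i + (t + (p - i)) = t + p := by omega
            rw [he, Nat.add_mod_right, Nat.mod_eq_of_lt ht]
          · intro l _
            rfl
      _ ≤ 1 := hb4 l0 hl0lt

end Vilenkin
end
end
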